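/- There exists a universal constant C > 0 such that the following holds. Let n, m be positive integers and 0 < η < 1/2 with 1/η² ≥ 2. Suppose there is a pure-state quantum random access code for {−1,1}^n with m qubits and advantage η, i.e., unit vectors y_g ∈ ℂ^{2^m} for each g ∈ {−1,1}^n together with Hermitian matrices M_1, …, M_n ∈ ℂ^{2^m × 2^m} satisfying 0 ≼ M_i ≼ I, such that for every g and every i ∈ [n]: ⟨y_g, M_i y_g⟩ ≥ 1/2 + η if g_i = 1, and ⟨y_g, M_i y_g⟩ ≤ 1/2 − η if g_i = −1. Then m ≥ log₂ n − log₂ log₂(1/η²) − C. -/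

import Mathlib

open Matrix MeasureTheory ProbabilityTheory
open scoped NNReal Kronecker ComplexOrder

/-- The spectral (operator) norm of a real square matrix. -/
noncomputable def specNorm {n : Type*} [Fintype n] [DecidableEq n] (A : Matrix n n ℝ) : ℝ :=
  ‖Matrix.toEuclideanCLM (𝕜 := ℝ) A‖

/-- The Frobenius norm of a real square matrix: `√(Tr(Aᵀ A))`. -/
noncomputable def frobNorm {n : Type*} [Fintype n] (A : Matrix n n ℝ) : ℝ :=
  Real.sqrt ((Aᵀ * A).trace)

/-- The trace inner product `⟨A, B⟩ = Tr(Aᵀ B)` of real square matrices. -/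
noncomputable def mInner {n : Type*} [Fintype n] (A B : Matrix n n ℝ) : ℝ :=
  (Aᵀ * B).trace

/-- The Euclidean (ℓ₂) norm of a vector in `ℝⁿ`. -/
noncomputable def l2norm {n : ℕ} (x : Fin n → ℝ) : ℝ := Real.sqrt (∑ i, (x i) ^ 2)

/-- The sign cube `{-1, 1}ⁿ` as a finite set of vectors in `ℝⁿ`. -/
noncomputable def signs (n : ℕ) : Finset (Fin n → ℝ) :=
  Fintype.piFinset fun _ => ({-1, 1} : Finset ℝ)

/-- The distribution of a `d × D` random matrix with i.i.d. Gaussian entries of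
mean `0` and variance `1/d`. -/
noncomputable def gaussMat (d D : ℕ) : Measure (Fin d → Fin D → ℝ) :=
  Measure.pi fun _ => Measure.pi fun _ => gaussianReal 0 (d : ℝ≥0)⁻¹

/-- The nuclear (trace) norm `Tr √(Mᵀ M)` of a real square matrix. -/
noncomputable def nucNorm {n : Type*} [Fintype n] [DecidableEq n] (M : Matrix n n ℝ) : ℝ :=
  ((Matrix.posSemidef_conjTranspose_mul_self M).1.eigenvectorUnitary.1 *
    diagonal ((RCLike.ofReal (K := ℝ)) ∘ Real.sqrt ∘
      (Matrix.posSemidef_conjTranspose_mul_self M).1.eigenvalues) *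
    (star (Matrix.posSemidef_conjTranspose_mul_self M).1.eigenvectorUnitary : Matrix n n ℝ)).trace

/-- The dual norm of a norm `N` on `ℝᵐ`: `‖y‖* = sup {⟨x, y⟩ : N x ≤ 1}`. -/
noncomputable def dualNorm {m : ℕ} (N : (Fin m → ℝ) → ℝ) (y : Fin m → ℝ) : ℝ :=
  sSup ((fun x => x ⬝ᵥ y) '' {x | N x ≤ 1})

/-- The binary entropy function (base 2). -/
noncomputable def binH (p : ℝ) : ℝ := -p * Real.logb 2 p - (1 - p) * Real.logb 2 (1 - p)

open Metric
open scoped ENNReal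


lemma my_conj_mul_re (z : ℂ) : ((starRingEnd ℂ) z * z).re = Complex.normSq z := by
  simp [Complex.mul_re, Complex.normSq_apply]


lemma my_dot_re (d : ℕ) (x : Fin d → ℂ) :
    (star x ⬝ᵥ x).re = ∑ j, Complex.normSq (x j) := by
  rw [dotProduct, Complex.re_sum]
  exact Finset.sum_congr rfl fun i _ => my_conj_mul_re (x i)

-- Packing bound: ε-separated points in the unit ball of ℝ^ι
lemma my_packing_card_le {ι : Type} [Fintype ι] [Nonempty ι] (ε : ℝ) (hε : 0 < ε)
    (S : Finset (EuclideanSpace ℝ ι)) (hS1 : ∀ x ∈ S, ‖x‖ ≤ 1)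
    (hsep : ∀ x ∈ S, ∀ z ∈ S, x ≠ z → ε ≤ dist x z) :
    (S.card : ℝ) ≤ (1 + 2 / ε) ^ (Fintype.card ι) := by
  classical
  set D := Fintype.card ι with hD
  set μ : Measure (EuclideanSpace ℝ ι) := volume with hμ
  set r : ℝ := ε / 2 with hr
  have hr0 : 0 < r := by positivity
  have hdisj : (S : Set (EuclideanSpace ℝ ι)).PairwiseDisjoint (fun x => ball x r) := by
    intro x hx z hz hxz
    exact ball_disjoint_ball (by rw [hr]; have := hsep x hx z hz hxz; linarith)
  have hsum : μ (⋃ x ∈ S, ball x r) = ∑ x ∈ S, μ (ball x r) :=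
    measure_biUnion_finset hdisj fun b _ => measurableSet_ball
  have hsub : (⋃ x ∈ S, ball x r) ⊆ ball 0 (1 + r) := by
    intro z hz
    simp only [Set.mem_iUnion] at hz
    obtain ⟨x, hx, hzx⟩ := hz
    have hx1 := hS1 x hx
    rw [mem_ball] at hzx ⊢
    have h0 : dist x 0 = ‖x‖ := by rw [dist_zero_right]
    calc dist z 0 ≤ dist z x + dist x 0 := dist_triangle _ _ _
    _ < r + 1 := by rw [h0]; linarith
    _ = 1 + r := by ring
  have hball : ∀ (x : EuclideanSpace ℝ ι) (s : ℝ), 0 ≤ s →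
      μ (ball x s) = ENNReal.ofReal (s ^ D) * μ (ball 0 1) := by
    intro x s hs
    rw [Measure.addHaar_ball μ x hs, finrank_euclideanSpace]
  have hB0 : μ (ball 0 1) ≠ 0 := (measure_ball_pos μ 0 one_pos).ne'
  have hBt : μ (ball 0 1) ≠ ⊤ := measure_ball_lt_top.ne
  have key : (S.card : ℝ≥0∞) * ENNReal.ofReal (r ^ D) ≤ ENNReal.ofReal ((1 + r) ^ D) := by
    rw [← ENNReal.mul_le_mul_iff_left hB0 hBt, mul_assoc]
    calc (S.card : ℝ≥0∞) * (ENNReal.ofReal (r ^ D) * μ (ball 0 1))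
        = ∑ x ∈ S, μ (ball x r) := by
          rw [Finset.sum_congr rfl fun x _ => hball x r hr0.le, Finset.sum_const,
            nsmul_eq_mul]
    _ = μ (⋃ x ∈ S, ball x r) := hsum.symm
    _ ≤ μ (ball 0 (1 + r)) := measure_mono hsub
    _ = ENNReal.ofReal ((1 + r) ^ D) * μ (ball 0 1) := hball 0 (1 + r) (by linarith)
  have key2 : (S.card : ℝ) * r ^ D ≤ (1 + r) ^ D := by
    have h1 : ((S.card : ℝ≥0∞)) * ENNReal.ofReal (r ^ D)
        = ENNReal.ofReal ((S.card : ℝ) * r ^ D) := by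
      rw [ENNReal.ofReal_mul (by positivity), ENNReal.ofReal_natCast]
    rw [h1] at key
    exact (ENNReal.ofReal_le_ofReal_iff (by positivity)).mp key
  have hpow : (1 + r) ^ D = (1 + 2 / ε) ^ D * r ^ D := by
    rw [← mul_pow]
    congr 1
    field_simp [hr]
    ring
  rw [hpow] at key2
  exact (mul_le_mul_iff_left₀ (by positivity : (0:ℝ) < r ^ D)).mp key2

-- Cauchy–Schwarz for a PSD matrix quadratic form over ℂ
lemma my_psd_cs {d : ℕ} {M : Matrix (Fin d) (Fin d) ℂ} (hM : M.PosSemidef)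
    (u v : Fin d → ℂ) :
    ‖star u ⬝ᵥ M *ᵥ v‖ ≤
      Real.sqrt (star u ⬝ᵥ M *ᵥ u).re * Real.sqrt (star v ⬝ᵥ M *ᵥ v).re := by
  classical
  obtain ⟨S, hMS⟩ : ∃ S : Matrix (Fin d) (Fin d) ℂ, M = Sᴴ * S := by
    open scoped MatrixOrder in
    exact CStarAlgebra.nonneg_iff_eq_star_mul_self.mp hM.nonneg
  have key : ∀ a b : Fin d → ℂ, star a ⬝ᵥ M *ᵥ b = star (S *ᵥ a) ⬝ᵥ (S *ᵥ b) := by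
    intro a b
    rw [star_mulVec, hMS, ← mulVec_mulVec,
      dotProduct_mulVec]
  have hnorm : ∀ p : Fin d → ℂ,
      Real.sqrt (star p ⬝ᵥ p).re = ‖(WithLp.equiv 2 (Fin d → ℂ)).symm p‖ := by
    intro p
    rw [EuclideanSpace.norm_eq]
    congr 1
    rw [dotProduct, Complex.re_sum]
    refine Finset.sum_congr rfl fun i _ => ?_
    rw [Pi.star_apply]
    show ((starRingEnd ℂ) (p i) * p i).re = _
    rw [my_conj_mul_re]
    simp [Complex.sq_norm]
  have hinner : ∀ p q : Fin d → ℂ,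
      (inner ℂ ((WithLp.equiv 2 (Fin d → ℂ)).symm p) ((WithLp.equiv 2 (Fin d → ℂ)).symm q) : ℂ)
        = star p ⬝ᵥ q := by
    intro p q
    rw [PiLp.inner_apply, dotProduct]
    exact Finset.sum_congr rfl fun i _ => by simp [RCLike.inner_apply, Pi.star_apply, mul_comm]
  rw [key u v, key u u, key v v, hnorm, hnorm, ← hinner]
  exact norm_inner_le_norm _ _

lemma my_quad_diff_le {d : ℕ} {M : Matrix (Fin d) (Fin d) ℂ} (hM : M.PosSemidef)
    (hM1 : (1 - M).PosSemidef) (a b : Fin d → ℂ)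
    (ha : ∑ j, Complex.normSq (a j) = 1) (hb : ∑ j, Complex.normSq (b j) = 1) :
    (star a ⬝ᵥ M *ᵥ a).re - (star b ⬝ᵥ M *ᵥ b).re
      ≤ 2 * Real.sqrt (∑ j, Complex.normSq (a j - b j)) := by
  classical
  have hQle : ∀ x : Fin d → ℂ, (star x ⬝ᵥ M *ᵥ x).re ≤ ∑ j, Complex.normSq (x j) := by
    intro x
    have h := hM1.dotProduct_mulVec_nonneg x
    rw [sub_mulVec, one_mulVec, dotProduct_sub] at h
    have h2 := (Complex.le_def.mp h).1
    simp only [Complex.zero_re, Complex.sub_re] at h2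
    rw [← my_dot_re d x]
    linarith
  set c : Fin d → ℂ := a - b with hc
  have hre : (star a ⬝ᵥ M *ᵥ a).re - (star b ⬝ᵥ M *ᵥ b).re
      = (star c ⬝ᵥ M *ᵥ a).re + (star b ⬝ᵥ M *ᵥ c).re := by
    rw [← Complex.sub_re, ← Complex.add_re]
    congr 1
    rw [hc]
    simp only [star_sub, sub_dotProduct, mulVec_sub, dotProduct_sub]
    ring
  set t := Real.sqrt (∑ j, Complex.normSq (c j)) with ht
  have ht0 : 0 ≤ t := Real.sqrt_nonneg _
  have hQc : Real.sqrt (star c ⬝ᵥ M *ᵥ c).re ≤ t := Real.sqrt_le_sqrt (hQle c)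
  have hQa : Real.sqrt (star a ⬝ᵥ M *ᵥ a).re ≤ 1 := by
    rw [show (1:ℝ) = Real.sqrt 1 from (Real.sqrt_one).symm]
    exact Real.sqrt_le_sqrt (le_of_le_of_eq (hQle a) ha)
  have hQb : Real.sqrt (star b ⬝ᵥ M *ᵥ b).re ≤ 1 := by
    rw [show (1:ℝ) = Real.sqrt 1 from (Real.sqrt_one).symm]
    exact Real.sqrt_le_sqrt (le_of_le_of_eq (hQle b) hb)
  have h1 : (star c ⬝ᵥ M *ᵥ a).re ≤ t := by
    calc (star c ⬝ᵥ M *ᵥ a).re ≤ ‖star c ⬝ᵥ M *ᵥ a‖ := Complex.re_le_norm _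
    _ ≤ Real.sqrt (star c ⬝ᵥ M *ᵥ c).re * Real.sqrt (star a ⬝ᵥ M *ᵥ a).re :=
        my_psd_cs hM c a
    _ ≤ t * 1 := mul_le_mul hQc hQa (Real.sqrt_nonneg _) ht0
    _ = t := mul_one t
  have h2 : (star b ⬝ᵥ M *ᵥ c).re ≤ t := by
    calc (star b ⬝ᵥ M *ᵥ c).re ≤ ‖star b ⬝ᵥ M *ᵥ c‖ := Complex.re_le_norm _
    _ ≤ Real.sqrt (star b ⬝ᵥ M *ᵥ b).re * Real.sqrt (star c ⬝ᵥ M *ᵥ c).re :=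
        my_psd_cs hM b c
    _ ≤ 1 * t := mul_le_mul hQb hQc (Real.sqrt_nonneg _) zero_le_one
    _ = t := one_mul t
  have heq : (∑ j, Complex.normSq (a j - b j)) = ∑ j, Complex.normSq (c j) := by
    simp [hc]
  rw [hre, heq]
  linarith

noncomputable def signs' (n : ℕ) : Finset (Fin n → ℝ) :=
  Fintype.piFinset fun _ => ({-1, 1} : Finset ℝ)

/-- Pure quantum case of Theorem 4.3, low-advantage bound.  If unit vectors
`y_g ∈ ℂ^{2^m}` together with two-outcome measurements `0 ≼ Mᵢ ≼ I` form a pure-state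
quantum random access code for `{±1}ⁿ` with advantage `η`, then
`m ≥ log₂ n − log₂ log₂ (1/η²) − C`. -/
theorem pure_qrac_lb_low_advantage :
    ∃ C : ℝ, 0 < C ∧
      ∀ (n m : ℕ) (η : ℝ), 0 < n → 0 < m →
        0 < η → η < 1 / 2 → 2 ≤ 1 / η ^ 2 →
        ∀ (y : (Fin n → ℝ) → (Fin (2 ^ m) → ℂ))
          (M : Fin n → Matrix (Fin (2 ^ m)) (Fin (2 ^ m)) ℂ),
          (∀ i, (M i).PosSemidef) →
          (∀ i, (1 - M i).PosSemidef) →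
          (∀ g : Fin n → ℝ, (∀ i, g i = 1 ∨ g i = -1) →
            ∑ j, Complex.normSq (y g j) = 1) →
          (∀ g : Fin n → ℝ, (∀ i, g i = 1 ∨ g i = -1) → ∀ i,
            (g i = 1 → 1 / 2 + η ≤ (star (y g) ⬝ᵥ (M i *ᵥ y g)).re) ∧
            (g i = -1 → (star (y g) ⬝ᵥ (M i *ᵥ y g)).re ≤ 1 / 2 - η)) →
          Real.logb 2 n - Real.logb 2 (Real.logb 2 (1 / η ^ 2)) - C ≤ (m : ℝ) := by
  classical
  refine ⟨3, by norm_num, ?_⟩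
  intro n m η hn hm hη hη2 hηsq y M hpsd hpsd1 hunit hmeas
  haveI : Nonempty (Fin (2 ^ m) × Bool) := ⟨(⟨0, pow_pos (by norm_num) m⟩, true)⟩
  let v : (Fin n → ℝ) → EuclideanSpace ℝ (Fin (2 ^ m) × Bool) := fun g =>
    (WithLp.equiv 2 (Fin (2 ^ m) × Bool → ℝ)).symm
      (fun p => if p.2 then (y g p.1).re else (y g p.1).im)
  have hvap : ∀ g p, v g p = if p.2 then (y g p.1).re else (y g p.1).im :=
    fun g p => rfl
  have hmem : ∀ g : Fin n → ℝ, g ∈ signs' n ↔ ∀ i, g i = 1 ∨ g i = -1 := by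
    intro g
    rw [signs', Fintype.mem_piFinset]
    constructor <;> intro h i <;> have hi := h i <;>
      simp only [Finset.mem_insert, Finset.mem_singleton] at * <;> tauto
  -- norms of images
  have hVnorm : ∀ g, (∀ i, g i = 1 ∨ g i = -1) → ‖v g‖ = 1 := by
    intro g hg
    rw [EuclideanSpace.norm_eq]
    have h : ∑ p : Fin (2 ^ m) × Bool, ‖v g p‖ ^ 2 = ∑ j, Complex.normSq (y g j) := by
      rw [Fintype.sum_prod_type]
      refine Finset.sum_congr rfl fun j _ => ?_
      rw [Fintype.sum_bool, hvap, hvap]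
      simp [Complex.normSq_apply, sq_abs]
      ring
    rw [h, hunit g hg, Real.sqrt_one]
  -- distances of images
  have hVdist : ∀ g g', dist (v g) (v g')
      = Real.sqrt (∑ j, Complex.normSq (y g j - y g' j)) := by
    intro g g'
    rw [EuclideanSpace.dist_eq]
    congr 1
    rw [Fintype.sum_prod_type]
    refine Finset.sum_congr rfl fun j _ => ?_
    rw [Fintype.sum_bool, hvap, hvap, hvap, hvap]
    simp [Real.dist_eq, sq_abs, Complex.normSq_apply, Complex.sub_re, Complex.sub_im]
    ring
  -- separation
  have hsep : ∀ g ∈ signs' n, ∀ g' ∈ signs' n, g ≠ g' → η ≤ dist (v g) (v g') := by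
    intro g hg g' hg' hne
    obtain ⟨i, hi⟩ := Function.ne_iff.mp hne
    have hgm := (hmem g).mp hg
    have hgm' := (hmem g').mp hg'
    have key : ∀ a b : Fin n → ℝ, (∀ i, a i = 1 ∨ a i = -1) → (∀ i, b i = 1 ∨ b i = -1) →
        a i = 1 → b i = -1 → η ≤ dist (v a) (v b) := by
      intro a b ha hb ha1 hb1
      have h1 := (hmeas a ha i).1 ha1
      have h2 := (hmeas b hb i).2 hb1
      have h3 := my_quad_diff_le (hpsd i) (hpsd1 i) (y a) (y b)
        (hunit a ha) (hunit b hb)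
      rw [hVdist]
      linarith
    rcases hgm i with h1 | h1 <;> rcases hgm' i with h2 | h2
    · exact absurd (h1.trans h2.symm) hi
    · exact key g g' hgm hgm' h1 h2
    · rw [dist_comm]; exact key g' g hgm' hgm h2 h1
    · exact absurd (h1.trans h2.symm) hi
  -- packing
  have hinj : Set.InjOn v (signs' n) := by
    intro g hg g' hg' hvv
    by_contra hne
    have h := hsep g hg g' hg' hne
    rw [hvv, dist_self] at h
    linarith
  have hcardV : (((signs' n).image v).card : ℝ) = (2 : ℝ) ^ n := by
    rw [Finset.card_image_of_injOn hinj, signs', Fintype.card_piFinset]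
    have h2 : ({-1, 1} : Finset ℝ).card = 2 := by
      rw [Finset.card_insert_of_notMem (by norm_num), Finset.card_singleton]
    simp [h2]
  have hpack : ((((signs' n).image v)).card : ℝ)
      ≤ (1 + 2 / η) ^ (Fintype.card (Fin (2 ^ m) × Bool)) := by
    refine my_packing_card_le η hη _ ?_ ?_
    · intro x hx
      obtain ⟨g, hg, rfl⟩ := Finset.mem_image.mp hx
      exact le_of_eq (hVnorm g ((hmem g).mp hg))
    · intro x hx z hz hxz
      obtain ⟨g, hg, rfl⟩ := Finset.mem_image.mp hx
      obtain ⟨g', hg', rfl⟩ := Finset.mem_image.mp hz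
      exact hsep g hg g' hg' (fun h => hxz (by rw [h]))
  have hcardι : Fintype.card (Fin (2 ^ m) × Bool) = 2 ^ (m + 1) := by
    rw [Fintype.card_prod, Fintype.card_fin, Fintype.card_bool]
    ring
  -- numerics
  have hsqpos : (0:ℝ) < 1 / η ^ 2 := one_div_pos.mpr (pow_pos hη 2)
  set L := Real.logb 2 (1 / η ^ 2) with hL
  have hL1 : 1 ≤ L := by
    have h := (Real.logb_le_logb one_lt_two two_pos hsqpos).mpr hηsq
    rwa [Real.logb_self_eq_one one_lt_two] at h
  have hbase : (1:ℝ) < 1 + 2 / η := by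
    have : 0 < 2 / η := by positivity
    linarith
  have h14 : 1 + 2 / η ≤ (1 / η ^ 2) ^ 2 := by
    have ha : 1 ≤ 1 / η := by rw [le_div_iff₀ hη, one_mul]; linarith
    have hb : 1 + 2 / η ≤ 3 / η := by
      have : (3:ℝ) / η = 1 / η + 2 / η := by ring
      linarith
    have hc : 3 / η ≤ 1 / (η ^ 2) ^ 2 := by
      rw [div_le_div_iff₀ hη (by positivity)]
      have hcube : η ^ 3 ≤ 1 / 8 := by nlinarith [hη, hη2, sq_nonneg η]
      nlinarith [mul_le_mul_of_nonneg_left hcube hη.le, hη]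
    calc 1 + 2 / η ≤ 3 / η := hb
    _ ≤ 1 / (η ^ 2) ^ 2 := hc
    _ = (1 / η ^ 2) ^ 2 := by rw [div_pow, one_pow]
  have hlogbase : Real.logb 2 (1 + 2 / η) ≤ 2 * L := by
    calc Real.logb 2 (1 + 2 / η) ≤ Real.logb 2 ((1 / η ^ 2) ^ 2) :=
      (Real.logb_le_logb one_lt_two (by linarith) (by positivity)).mpr h14
    _ = 2 * L := by rw [Real.logb_pow]; push_cast; ring
  have hchain : (n : ℝ) ≤ 2 ^ (m + 2) * L := by
    have hpow : (2:ℝ) ^ n ≤ (1 + 2 / η) ^ (2 ^ (m + 1)) := by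
      rw [← hcardV, ← hcardι]; exact hpack
    have hlog : (n : ℝ) ≤ (2 ^ (m + 1) : ℕ) * Real.logb 2 (1 + 2 / η) := by
      have h := (Real.logb_le_logb one_lt_two (by positivity) (by positivity)).mpr hpow
      rwa [Real.logb_pow, Real.logb_pow, Real.logb_self_eq_one one_lt_two, mul_one] at h
    calc (n : ℝ) ≤ (2 ^ (m + 1) : ℕ) * Real.logb 2 (1 + 2 / η) := hlog
    _ ≤ (2 ^ (m + 1) : ℕ) * (2 * L) := by
        exact mul_le_mul_of_nonneg_left hlogbase (by positivity)
    _ = 2 ^ (m + 2) * L := by push_cast; ring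
  have hnpos : (0:ℝ) < n := by exact_mod_cast hn
  have hfinal : Real.logb 2 n ≤ (m : ℝ) + 2 + Real.logb 2 L := by
    have h2 := (Real.logb_le_logb one_lt_two hnpos (by positivity)).mpr hchain
    rw [Real.logb_mul (by positivity) (by intro h; rw [h] at hL1; linarith : L ≠ 0),
      Real.logb_pow, Real.logb_self_eq_one one_lt_two, mul_one] at h2
    push_cast at h2
    linarith
  linarith
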